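/- Let k, ℓ, n be positive integers with k + ℓ < n, let m = n, and suppose c ≥ 3 is prime and n is odd. Then x^n + y^n = c·x^k·y^ℓ has no positive integer solutions. -/

import Mathlib

theorem case8_prime_odd (k ℓ n c : ℕ) (hk : 0 < k) (hℓ : 0 < ℓ)
    (hkln : k + ℓ < n) (hodd : Odd n) (hc : Nat.Prime c) (hc3 : 3 ≤ c) :
    ¬ ∃ x y : ℕ, 0 < x ∧ 0 < y ∧ x ^ n + y ^ n = c * x ^ k * y ^ ℓ := by
  rintro ⟨x, y, hx, hy, heq⟩
  set g := Nat.gcd x y with hg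
  have hg0 : 0 < g := Nat.gcd_pos_of_pos_left y hx
  set a := x / g with ha
  set b := y / g with hb
  have hab : Nat.Coprime a b := Nat.coprime_div_gcd_div_gcd hg0
  have hxa : x = g * a := (Nat.div_mul_cancel (Nat.gcd_dvd_left x y)).symm.trans (mul_comm _ _)
  have hyb : y = g * b := (Nat.div_mul_cancel (Nat.gcd_dvd_right x y)).symm.trans (mul_comm _ _)
  have ha0 : 0 < a := by
    rcases Nat.eq_zero_or_pos a with h | h
    · rw [hxa, h, mul_zero] at hx; exact absurd hx (lt_irrefl 0)
    · exact h
  have hb0 : 0 < b := by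
    rcases Nat.eq_zero_or_pos b with h | h
    · rw [hyb, h, mul_zero] at hy; exact absurd hy (lt_irrefl 0)
    · exact h
  -- rewrite the equation
  set m := n - (k + ℓ) with hm
  have hm0 : 0 < m := Nat.sub_pos_of_lt hkln
  have hnm : n = (k + ℓ) + m := by omega
  rw [hxa, hyb] at heq
  have heq2 : g ^ (k + ℓ) * (g ^ m * (a ^ n + b ^ n))
      = g ^ (k + ℓ) * (c * (a ^ k * b ^ ℓ)) := by
    simp only [mul_pow] at heq
    calc g ^ (k + ℓ) * (g ^ m * (a ^ n + b ^ n))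
        = g ^ n * a ^ n + g ^ n * b ^ n := by rw [hnm]; ring
      _ = c * (g ^ k * a ^ k) * (g ^ ℓ * b ^ ℓ) := heq
      _ = g ^ (k + ℓ) * (c * (a ^ k * b ^ ℓ)) := by ring
  have heq3 : g ^ m * (a ^ n + b ^ n) = c * (a ^ k * b ^ ℓ) :=
    Nat.eq_of_mul_eq_mul_left (Nat.pow_pos hg0) heq2
  -- coprimality of a^n + b^n with a^k * b^ℓ
  have hcop : Nat.Coprime (a ^ n + b ^ n) (a ^ k * b ^ ℓ) := by
    have h1 : Nat.Coprime (a ^ n + b ^ n) a := by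
      have : Nat.Coprime (b ^ n) a := (hab.symm.pow_left n)
      have hdvd : a ∣ a ^ n := dvd_pow_self a (by omega)
      obtain ⟨t, ht⟩ := hdvd
      rw [ht, mul_comm a t, add_comm]
      simpa using (Nat.coprime_add_mul_right_left (b ^ n) a t).mpr this
    have h2 : Nat.Coprime (a ^ n + b ^ n) b := by
      have : Nat.Coprime (a ^ n) b := (hab.pow_left n)
      have hdvd : b ∣ b ^ n := dvd_pow_self b (by omega)
      obtain ⟨t, ht⟩ := hdvd
      rw [ht, mul_comm b t]
      simpa using (Nat.coprime_add_mul_right_left (a ^ n) b t).mpr this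
    exact Nat.Coprime.mul_right (h1.pow_right k) (h2.pow_right ℓ)
  -- a^n + b^n divides c
  have hdvdc : (a ^ n + b ^ n) ∣ c := by
    have : (a ^ n + b ^ n) ∣ c * (a ^ k * b ^ ℓ) := ⟨g ^ m, by rw [← heq3]; ring⟩
    exact hcop.dvd_of_dvd_mul_right this
  have heqc : a ^ n + b ^ n = c := by
    rcases (Nat.Prime.eq_one_or_self_of_dvd hc _ hdvdc) with h | h
    · exfalso
      have h1 : 1 ≤ a ^ n := Nat.one_le_pow _ _ ha0
      have h2 : 1 ≤ b ^ n := Nat.one_le_pow _ _ hb0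
      omega
    · exact h
  -- a + b divides a^n + b^n = c
  have habd : a + b ∣ a ^ n + b ^ n := Odd.nat_add_dvd_pow_add_pow a b hodd
  have habc : a + b ∣ c := heqc ▸ habd
  have habeq : a + b = c := by
    rcases (Nat.Prime.eq_one_or_self_of_dvd hc _ habc) with h | h
    · omega
    · exact h
  -- conclude a = b = 1
  have hale : a ≤ a ^ n := Nat.le_self_pow (by omega) a
  have hble : b ≤ b ^ n := Nat.le_self_pow (by omega) b
  have haeq : a ^ n = a := by omega
  have hbeq : b ^ n = b := by omega
  have ha1 : a = 1 := by
    by_contra h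
    have ha2 : 2 ≤ a := by omega
    have := Nat.pow_right_injective ha2 (haeq.trans (pow_one a).symm)
    omega
  have hb1 : b = 1 := by
    by_contra h
    have hb2 : 2 ≤ b := by omega
    have := Nat.pow_right_injective hb2 (hbeq.trans (pow_one b).symm)
    omega
  rw [ha1, hb1] at habeq
  omega
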